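/- The quartic polynomial kernel S_4 with parameters a₀₂, a₀₃ satisfies the partition of unity: for every real t, Σ_{i∈ℤ} S_4(t - i) = 1. -/
import Mathlib


noncomputable def S4 (a2 a3 t : ℝ) : ℝ :=
  if |t| < 1 then
    (1 - |t|) * (1 + |t| + (1 + a2) * |t| ^ 2 + (1 + a2 + a3) * |t| ^ 3)
  else if |t| < 2 then
    (1 - |t|) * (2 - |t|) ^ 2 * (5 + 3 * a2 + 2 * a3 - (1 + a2 + a3) * |t|)
  else 0

theorem S4_partition_of_unity (a2 a3 : ℝ) (t : ℝ) :
    ∑' i : ℤ, S4 a2 a3 (t - i) = 1 := by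
  set n : ℤ := ⌊t⌋ with hn
  have h0 : (n : ℝ) ≤ t := Int.floor_le t
  have h1 : t < n + 1 := Int.lt_floor_add_one t
  have hsum : ∑' i : ℤ, S4 a2 a3 (t - i) =
      ∑ i ∈ ({n-1, n, n+1, n+2} : Finset ℤ), S4 a2 a3 (t - i) := by
    apply tsum_eq_sum
    intro i hi
    simp only [Finset.mem_insert, Finset.mem_singleton] at hi
    push_neg at hi
    have hcase : i ≤ n - 2 ∨ n + 3 ≤ i := by omega
    have habs : (2:ℝ) ≤ |t - i| := by
      rcases hcase with h | h
      · have : (i:ℝ) ≤ n - 2 := by exact_mod_cast Int.cast_le.mpr h |>.trans_eq (by push_cast; ring)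
        have h2 : (2:ℝ) ≤ t - i := by linarith
        calc (2:ℝ) ≤ t - i := h2
          _ ≤ |t - i| := le_abs_self _
      · have : (n:ℝ) + 3 ≤ i := by exact_mod_cast Int.cast_le.mpr h |>.trans_eq' (by push_cast; ring)
        have h2 : t - i ≤ -2 := by linarith
        calc (2:ℝ) ≤ -(t - i) := by linarith
          _ ≤ |t - i| := neg_le_abs _
    have h1' : ¬ |t - i| < 1 := by linarith
    have h2' : ¬ |t - i| < 2 := by linarith
    simp [S4, h1', h2']
  rw [hsum]
  have d1 : n - 1 ≠ n := by omega
  have d2 : n - 1 ≠ n + 1 := by omega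
  have d3 : n - 1 ≠ n + 2 := by omega
  have d4 : n ≠ n + 1 := by omega
  have d5 : n ≠ n + 2 := by omega
  have d6 : n + 1 ≠ n + 2 := by omega
  rw [Finset.sum_insert (by simp [d1, d2, d3]),
      Finset.sum_insert (by simp [d4, d5]),
      Finset.sum_insert (by simp [d6]), Finset.sum_singleton]
  set s : ℝ := t - n with hs
  have hs0 : 0 ≤ s := by simp [hs]; linarith
  have hs1 : s < 1 := by simp [hs]; linarith
  have e1 : t - ((n:ℤ) - 1 : ℤ) = s + 1 := by push_cast; ring
  have e2 : t - (n : ℤ) = s := by push_cast; ring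
  have e3 : t - ((n:ℤ) + 1 : ℤ) = s - 1 := by push_cast; ring
  have e4 : t - ((n:ℤ) + 2 : ℤ) = s - 2 := by push_cast; ring
  rw [e1, e3, e4]
  rcases eq_or_lt_of_le hs0 with h | h
  · -- s = 0
    rw [← h]
    norm_num [S4, abs_of_nonneg, abs_of_nonpos]
  · -- 0 < s < 1
    have a1 : |s + 1| = s + 1 := abs_of_nonneg (by linarith)
    have a2' : |s| = s := abs_of_nonneg hs0
    have a3' : |s - 1| = 1 - s := by rw [abs_of_nonpos (by linarith)]; ring
    have a4 : |s - 2| = 2 - s := by rw [abs_of_nonpos (by linarith)]; ring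
    have c1 : ¬ |s + 1| < 1 := by rw [a1]; linarith
    have c2 : |s + 1| < 2 := by rw [a1]; linarith
    have c3 : |s| < 1 := by rw [a2']; linarith
    have c4 : |s - 1| < 1 := by rw [a3']; linarith
    have c5 : ¬ |s - 2| < 1 := by rw [a4]; linarith
    have c6 : |s - 2| < 2 := by rw [a4]; linarith
    unfold S4
    rw [if_neg c1, if_pos c2, if_pos c3, if_pos c4, if_neg c5, if_pos c6, a1, a2', a3', a4]
    ring
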